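/- For any T ⊆ N, the Shapley interaction index I^Sh(T) = ∑_{S ⊆ N\T} |S|!(n-|S|-|T|)!/(n-|T|+1)! · Δu_T(S) equals ∑_{S ⊆ N\T} I(S ∪ T)/(|S|+1), where I is the Harsanyi dividend of u. -/

import Mathlib

open Finset

private lemma neg_one_pow_sub_real {m w : ℕ} (h : w ≤ m) :
    ((-1 : ℝ)) ^ (m - w) = (-1) ^ m * (-1) ^ w := by
  have h1 : ((-1:ℝ))^(m-w) * (-1)^w = (-1)^m := by
    rw [← pow_add, Nat.sub_add_cancel h]
  calc ((-1:ℝ))^(m-w) = (-1)^(m-w) * ((-1)^w * (-1)^w) := by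
        rw [← pow_add, Even.neg_one_pow ⟨w, rfl⟩, mul_one]
    _ = (-1)^m * (-1)^w := by rw [← mul_assoc, h1]

private lemma sum_filter_superset {α : Type*} [DecidableEq α] {A K : Finset α} (hK : K ⊆ A)
    (f : Finset α → ℝ) :
    ∑ S ∈ A.powerset.filter (fun S => K ⊆ S), f S = ∑ J ∈ (A \ K).powerset, f (J ∪ K) := by
  refine sum_nbij' (fun S => S \ K) (fun J => J ∪ K) ?_ ?_ ?_ ?_ ?_
  · intro S hS
    simp only [mem_filter, mem_powerset] at hS ⊢
    exact sdiff_subset_sdiff hS.1 Subset.rfl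
  · intro J hJ
    simp only [mem_powerset] at hJ
    simp only [mem_filter, mem_powerset]
    exact ⟨union_subset (hJ.trans (sdiff_subset)) hK, subset_union_right⟩
  · intro S hS
    simp only [mem_filter, mem_powerset] at hS
    show S \ K ∪ K = S
    rw [sdiff_union_self_eq_union, union_eq_left.2 hS.2]
  · intro J hJ
    simp only [mem_powerset] at hJ
    show (J ∪ K) \ K = J
    exact union_sdiff_cancel_right (subset_sdiff.1 hJ).2
  · intro S hS
    simp only [mem_filter, mem_powerset] at hS
    show f S = f (S \ K ∪ K)
    rw [sdiff_union_self_eq_union, union_eq_left.2 hS.2]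

private lemma sum_powerset_union_disj {α : Type*} [DecidableEq α] {P Q : Finset α}
    (h : Disjoint P Q) (f : Finset α → ℝ) :
    ∑ W ∈ (P ∪ Q).powerset, f W = ∑ A ∈ P.powerset, ∑ B ∈ Q.powerset, f (A ∪ B) := by
  rw [← sum_product']
  refine sum_nbij' (fun W => (W ∩ P, W ∩ Q)) (fun p => p.1 ∪ p.2) ?_ ?_ ?_ ?_ ?_
  · intro W hW
    simp only [mem_powerset] at hW
    simp [mem_product, inter_subset_right]
  · intro p hp
    simp only [mem_product, mem_powerset] at hp
    simp only [mem_powerset]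
    exact union_subset (hp.1.trans subset_union_left) (hp.2.trans subset_union_right)
  · intro W hW
    simp only [mem_powerset] at hW
    show W ∩ P ∪ W ∩ Q = W
    rw [← inter_union_distrib_left, inter_eq_left.2 hW]
  · intro p hp
    simp only [mem_product, mem_powerset] at hp
    have h1 : (p.1 ∪ p.2) ∩ P = p.1 := by
      rw [union_inter_distrib_right, inter_eq_left.2 hp.1,
        disjoint_iff_inter_eq_empty.1 (h.symm.mono_left hp.2), union_empty]
    have h2 : (p.1 ∪ p.2) ∩ Q = p.2 := by
      rw [union_inter_distrib_right, inter_eq_left.2 hp.2,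
        disjoint_iff_inter_eq_empty.1 (h.mono_left hp.1), empty_union]
    show (_, _) = p
    rw [h1, h2]
  · intro W hW
    simp only [mem_powerset] at hW
    show f W = f (W ∩ P ∪ W ∩ Q)
    rw [← inter_union_distrib_left, inter_eq_left.2 hW]

private lemma alt_sum_superset {α : Type*} [DecidableEq α] {A K : Finset α} (hK : K ⊆ A) :
    ∑ S ∈ A.powerset.filter (fun S => K ⊆ S), ((-1:ℝ)) ^ S.card
      = if K = A then (-1:ℝ)^A.card else 0 := by
  rw [sum_filter_superset hK]
  have key : ∀ J ∈ (A \ K).powerset, ((-1:ℝ))^(J ∪ K).card = (-1)^K.card * (-1)^J.card := by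
    intro J hJ
    simp only [mem_powerset] at hJ
    rw [card_union_of_disjoint (subset_sdiff.1 hJ).2, pow_add, mul_comm]
  rw [sum_congr rfl key, ← mul_sum]
  have : (∑ J ∈ (A \ K).powerset, ((-1:ℝ))^J.card)
      = ((∑ J ∈ (A \ K).powerset, ((-1:ℤ))^J.card : ℤ) : ℝ) := by push_cast; rfl
  rw [this, Finset.sum_powerset_neg_one_pow_card]
  by_cases hKA : K = A
  · simp [hKA]
  · have : ¬ (A \ K = ∅) := by
      rw [sdiff_eq_empty_iff_subset]
      exact fun hAK => hKA (hK.antisymm hAK)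
    simp [this, hKA]

private lemma delta_eq_dividend_sum {N : Type*} [DecidableEq N] (u I : Finset N → ℝ)
    (hI : ∀ S : Finset N, I S = ∑ T ∈ S.powerset, (-1 : ℝ) ^ (S.card - T.card) * u T)
    {S T : Finset N} (hST : Disjoint S T) :
    ∑ L ∈ T.powerset, (-1:ℝ)^(T.card - L.card) * u (L ∪ S)
      = ∑ K ∈ S.powerset, I (K ∪ T) := by
  have step1 : ∀ K ∈ S.powerset, I (K ∪ T)
      = ∑ A ∈ K.powerset, ∑ B ∈ T.powerset,
          (-1:ℝ)^K.card * ((-1)^A.card * ((-1)^T.card * (-1)^B.card * u (A ∪ B))) := by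
    intro K hK
    simp only [mem_powerset] at hK
    have hKT : Disjoint K T := hST.mono_left hK
    rw [hI, sum_powerset_union_disj hKT]
    refine sum_congr rfl fun A hA => sum_congr rfl fun B hB => ?_
    simp only [mem_powerset] at hA hB
    have hAB : Disjoint A B := hKT.mono hA hB
    have hcard : (A ∪ B).card = A.card + B.card := card_union_of_disjoint hAB
    have hKTcard : (K ∪ T).card = K.card + T.card := card_union_of_disjoint hKT
    have hle : (A ∪ B).card ≤ (K ∪ T).card := card_le_card (union_subset_union hA hB)
    rw [neg_one_pow_sub_real hle, hKTcard, hcard, pow_add, pow_add]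
    ring
  rw [sum_congr rfl step1,
    sum_comm' (s := S.powerset) (t := fun K => K.powerset) (t' := S.powerset)
      (s' := fun A => S.powerset.filter (fun K => A ⊆ K))
      (fun K A => by
        simp only [mem_powerset, mem_filter]
        constructor
        · rintro ⟨h1, h2⟩; exact ⟨⟨h1, h2⟩, h2.trans h1⟩
        · rintro ⟨⟨h1, h2⟩, h3⟩; exact ⟨h1, h2⟩)]
  have step2 : ∀ A ∈ S.powerset,
      (∑ K ∈ S.powerset.filter (fun K => A ⊆ K), ∑ B ∈ T.powerset,
          (-1:ℝ)^K.card * ((-1)^A.card * ((-1)^T.card * (-1)^B.card * u (A ∪ B))))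
      = if A = S then
          (-1:ℝ)^S.card * ((-1)^A.card * ∑ B ∈ T.powerset,
            (-1)^T.card * (-1)^B.card * u (A ∪ B))
        else 0 := by
    intro A hA
    have : ∀ K ∈ S.powerset.filter (fun K => A ⊆ K),
        (∑ B ∈ T.powerset,
          (-1:ℝ)^K.card * ((-1)^A.card * ((-1)^T.card * (-1)^B.card * u (A ∪ B))))
        = (-1:ℝ)^K.card * ((-1)^A.card * ∑ B ∈ T.powerset,
            (-1)^T.card * (-1)^B.card * u (A ∪ B)) := by
      intro K _
      rw [mul_sum, mul_sum]
    rw [sum_congr rfl this, ← sum_mul, alt_sum_superset (mem_powerset.1 hA), ite_mul, zero_mul]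
  rw [sum_congr rfl step2, sum_ite_eq' S.powerset S, if_pos (mem_powerset_self S),
    ← mul_assoc, ← pow_add, Even.neg_one_pow ⟨S.card, rfl⟩, one_mul]
  refine sum_congr rfl fun L hL => ?_
  simp only [mem_powerset] at hL
  rw [neg_one_pow_sub_real (card_le_card hL), union_comm]

private lemma nat_sum_identity (M k : ℕ) :
    (k+1) * ∑ j ∈ range (M+1), M.choose j * ((k+j).factorial * (M-j).factorial)
      = (M+k+1).factorial := by
  have hterm : ∀ j ∈ range (M+1), M.choose j * ((k+j).factorial * (M-j).factorial)
      = M.factorial * k.factorial * ((j+k).choose k) := by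
    intro j hj
    have hjM : j ≤ M := by simpa [Nat.lt_succ_iff] using mem_range.1 hj
    have h1 := Nat.choose_mul_factorial_mul_factorial hjM
    have h2 := Nat.choose_mul_factorial_mul_factorial (Nat.le_add_left k j)
    rw [Nat.add_sub_cancel] at h2
    apply Nat.eq_of_mul_eq_mul_right (Nat.factorial_pos j)
    calc M.choose j * ((k+j).factorial * (M-j).factorial) * j.factorial
        = (M.choose j * j.factorial * (M-j).factorial) * (k+j).factorial := by ring
      _ = M.factorial * (k+j).factorial := by rw [h1]
      _ = M.factorial * (j+k).factorial := by rw [Nat.add_comm k j]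
      _ = M.factorial * ((j+k).choose k * k.factorial * j.factorial) := by rw [h2]
      _ = M.factorial * k.factorial * ((j+k).choose k) * j.factorial := by ring
  rw [sum_congr rfl hterm, ← mul_sum, Nat.sum_range_add_choose M k]
  have hle : k + 1 ≤ M + k + 1 := by omega
  have h3 := Nat.choose_mul_factorial_mul_factorial hle
  have h4 : M + k + 1 - (k + 1) = M := by omega
  rw [h4] at h3
  calc (k+1) * (M.factorial * k.factorial * (M+k+1).choose (k+1))
      = (M+k+1).choose (k+1) * ((k+1) * k.factorial) * M.factorial := by ring
    _ = (M+k+1).choose (k+1) * (k+1).factorial * M.factorial := by rw [Nat.factorial_succ]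
    _ = (M+k+1).factorial := h3

private lemma coeff_sum {N : Type*} [Fintype N] [DecidableEq N] (T K : Finset N)
    (hK : K ⊆ univ \ T) :
    ∑ S ∈ (univ \ T).powerset.filter (fun S => K ⊆ S),
        ((S.card.factorial * (Fintype.card N - S.card - T.card).factorial : ℝ) /
          (Fintype.card N - T.card + 1).factorial)
      = 1 / (K.card + 1) := by
  set n := Fintype.card N with hn
  have htn : T.card ≤ n := by rw [hn, ← card_univ]; exact card_le_card (subset_univ T)
  have hAcard : (univ \ T).card = n - T.card := by
    rw [card_sdiff_of_subset (subset_univ T), card_univ]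
  set k := K.card with hk
  set m := n - T.card with hm
  have hkm : k ≤ m := hAcard ▸ card_le_card hK
  set M := m - k with hM
  have hMcard : ((univ \ T) \ K).card = M := by rw [card_sdiff_of_subset hK, hAcard]
  rw [sum_filter_superset hK]
  have hcongr : ∀ J ∈ ((univ \ T) \ K).powerset,
      (((J ∪ K).card.factorial * (n - (J ∪ K).card - T.card).factorial : ℝ) /
        (n - T.card + 1).factorial)
      = (fun j => (((k + j).factorial * (M - j).factorial : ℕ) : ℝ)
          / ((m + 1).factorial : ℕ)) J.card := by
    intro J hJ
    simp only [mem_powerset] at hJ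
    have hdisj : Disjoint J K := (subset_sdiff.1 hJ).2
    have hJle : J.card ≤ M := hMcard ▸ card_le_card hJ
    have e1 : (J ∪ K).card = k + J.card := by
      rw [card_union_of_disjoint hdisj, add_comm]
    have e2 : n - (k + J.card) - T.card = M - J.card := by omega
    rw [e1, e2]
    push_cast
    rfl
  rw [sum_congr rfl hcongr,
    sum_powerset_apply_card
      (fun j => (((k + j).factorial * (M - j).factorial : ℕ) : ℝ) / ((m + 1).factorial : ℕ)),
    hMcard]
  have key := nat_sum_identity M k
  have hmk : M + k + 1 = m + 1 := by omega
  rw [hmk] at key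
  have hpos1 : (0:ℝ) < ((m+1).factorial : ℕ) := by exact_mod_cast Nat.factorial_pos _
  have hpos2 : (0:ℝ) < (k:ℝ) + 1 := by positivity
  have hsum : ∑ j ∈ range (M+1), M.choose j •
        ((((k + j).factorial * (M - j).factorial : ℕ) : ℝ) / ((m + 1).factorial : ℕ))
      = ((∑ j ∈ range (M+1), M.choose j * ((k+j).factorial * (M-j).factorial) : ℕ) : ℝ)
          / ((m + 1).factorial : ℕ) := by
    push_cast
    rw [sum_div]
    refine sum_congr rfl fun j _ => ?_
    ring
  rw [hsum, div_eq_div_iff hpos1.ne' hpos2.ne', one_mul, mul_comm]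
  exact_mod_cast congrArg (Nat.cast : ℕ → ℝ) key

theorem shapley_interaction_index_eq {N : Type*} [Fintype N] [DecidableEq N]
    (u I : Finset N → ℝ) (hu : u ∅ = 0)
    (hI : ∀ S : Finset N, I S = ∑ T ∈ S.powerset, (-1 : ℝ) ^ (S.card - T.card) * u T)
    (T : Finset N) :
    ∑ S ∈ (Finset.univ \ T).powerset,
        ((S.card.factorial * (Fintype.card N - S.card - T.card).factorial : ℝ) /
          (Fintype.card N - T.card + 1).factorial) *
        (∑ L ∈ T.powerset, (-1 : ℝ) ^ (T.card - L.card) * u (L ∪ S))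
      = ∑ S ∈ (Finset.univ \ T).powerset, I (S ∪ T) / (S.card + 1) := by
  have hdisj : ∀ S : Finset N, S ∈ (Finset.univ \ T).powerset → Disjoint S T :=
    fun S hS => (subset_sdiff.1 (mem_powerset.1 hS)).2
  calc ∑ S ∈ (Finset.univ \ T).powerset,
        ((S.card.factorial * (Fintype.card N - S.card - T.card).factorial : ℝ) /
          (Fintype.card N - T.card + 1).factorial) *
        (∑ L ∈ T.powerset, (-1 : ℝ) ^ (T.card - L.card) * u (L ∪ S))
      = ∑ S ∈ (Finset.univ \ T).powerset, ∑ K ∈ S.powerset,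
          ((S.card.factorial * (Fintype.card N - S.card - T.card).factorial : ℝ) /
            (Fintype.card N - T.card + 1).factorial) * I (K ∪ T) :=
        sum_congr rfl fun S hS => by
          rw [delta_eq_dividend_sum u I hI (hdisj S hS), mul_sum]
    _ = ∑ K ∈ (Finset.univ \ T).powerset,
          ∑ S ∈ (Finset.univ \ T).powerset.filter (fun S => K ⊆ S),
          ((S.card.factorial * (Fintype.card N - S.card - T.card).factorial : ℝ) /
            (Fintype.card N - T.card + 1).factorial) * I (K ∪ T) :=
        sum_comm' (fun S K => by
          simp only [mem_powerset, mem_filter]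
          constructor
          · rintro ⟨h1, h2⟩; exact ⟨⟨h1, h2⟩, h2.trans h1⟩
          · rintro ⟨⟨h1, h2⟩, _⟩; exact ⟨h1, h2⟩)
    _ = ∑ K ∈ (Finset.univ \ T).powerset, (1 / (K.card + 1 : ℝ)) * I (K ∪ T) := by
        refine sum_congr rfl fun K hK => ?_
        rw [← sum_mul, coeff_sum T K (mem_powerset.1 hK)]
    _ = ∑ S ∈ (Finset.univ \ T).powerset, I (S ∪ T) / (S.card + 1) :=
        sum_congr rfl fun K _ => one_div_mul_eq_div _ _
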